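/- Suppose K is a nice cone, i.e., K* + E^⊥ is closed for every face E of K. Then the conic system P = {x : Ax ≤_K b} is well-behaved if and only if the set {(A*y, ⟨b, y⟩) : y ∈ K*} ⊆ X × ℝ is closed. -/

import Mathlib

open scoped RealInnerProductSpace Pointwise

noncomputable section

/-- The dual cone of a set `K` in a real inner product space. -/
def dualConeSet {Y : Type*} [NormedAddCommGroup Y] [InnerProductSpace ℝ Y] (K : Set Y) : Set Y :=
  {y | ∀ x ∈ K, 0 ≤ ⟪y, x⟫}

/-- `E` is a face of the cone `C`. -/
def IsFaceOf {Y : Type*} [NormedAddCommGroup Y] [InnerProductSpace ℝ Y]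
    (C E : Set Y) : Prop :=
  E ⊆ C ∧ Convex ℝ E ∧
    ∀ x₁ ∈ C, ∀ x₂ ∈ C, (1 / 2 : ℝ) • (x₁ + x₂) ∈ E → x₁ ∈ E ∧ x₂ ∈ E

/-- The conic system `P = {x | Ax ≤_K b}` is well-behaved. -/
def WellBehavedSystem {X Y : Type*}
    [NormedAddCommGroup X] [InnerProductSpace ℝ X] [FiniteDimensional ℝ X]
    [NormedAddCommGroup Y] [InnerProductSpace ℝ Y] [FiniteDimensional ℝ Y]
    (A : X →ₗ[ℝ] Y) (b : Y) (K : Set Y) : Prop :=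
  ∀ (c : X) (v : ℝ), IsLUB {r : ℝ | ∃ x : X, b - A x ∈ K ∧ r = ⟪c, x⟫} v →
    ∃ y ∈ dualConeSet K, LinearMap.adjoint A y = c ∧ ⟪b, y⟫ = v

namespace WBAux

variable {X Y : Type*}
  [NormedAddCommGroup X] [InnerProductSpace ℝ X] [FiniteDimensional ℝ X]
  [NormedAddCommGroup Y] [InnerProductSpace ℝ Y] [FiniteDimensional ℝ Y]

lemma dcs_zero (K : Set Y) : (0 : Y) ∈ dualConeSet K := fun x _ => by
  simp [inner_zero_left]

lemma dcs_add {K : Set Y} {y z : Y} (hy : y ∈ dualConeSet K) (hz : z ∈ dualConeSet K) :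
    y + z ∈ dualConeSet K := fun x hx => by
  rw [inner_add_left]; exact add_nonneg (hy x hx) (hz x hx)

lemma dcs_smul {K : Set Y} {t : ℝ} (ht : 0 ≤ t) {y : Y} (hy : y ∈ dualConeSet K) :
    t • y ∈ dualConeSet K := fun x hx => by
  rw [real_inner_smul_left]; exact mul_nonneg ht (hy x hx)

lemma dcs_antitone {K K' : Set Y} (h : K ⊆ K') : dualConeSet K' ⊆ dualConeSet K :=
  fun y hy x hx => hy x (h hx)

lemma dcs_isClosed (K : Set Y) : IsClosed (dualConeSet K) := by
  have h : dualConeSet K = ⋂ x ∈ K, {y : Y | 0 ≤ ⟪y, x⟫} := by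
    ext y; simp [dualConeSet]
  rw [h]
  exact isClosed_biInter fun x _ => isClosed_le continuous_const
    (Continuous.inner continuous_id continuous_const)

lemma add_mem_of_convex {K : Set Y} (hconv : Convex ℝ K)
    (hcone : ∀ t : ℝ, 0 ≤ t → ∀ x ∈ K, t • x ∈ K) :
    ∀ x ∈ K, ∀ y ∈ K, x + y ∈ K := by
  intro x hx y hy
  have h2 : (1/2 : ℝ) • x + (1/2 : ℝ) • y ∈ K :=
    hconv hx hy (by norm_num) (by norm_num) (by norm_num)
  have h3 := hcone 2 (by norm_num) _ h2
  rwa [smul_add, smul_smul, smul_smul, show (2:ℝ) * (1/2) = 1 by norm_num, one_smul,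
    one_smul] at h3

/-- Build a `ConvexCone` from a convex cone given as a set. -/
def toCone (K : Set Y) (hconv : Convex ℝ K)
    (hcone : ∀ t : ℝ, 0 ≤ t → ∀ x ∈ K, t • x ∈ K) : ConvexCone ℝ Y where
  carrier := K
  smul_mem' := fun c hc x hx => hcone c hc.le x hx
  add_mem' := fun x hx y hy => add_mem_of_convex hconv hcone x hx y hy

lemma cone_sep (K : ConvexCone ℝ Y) (hne : (K : Set Y).Nonempty) (hc : IsClosed (K : Set Y))
    {b : Y} (hb : b ∉ K) : ∃ y, (∀ x ∈ K, 0 ≤ ⟪x, y⟫) ∧ ⟪y, b⟫ < 0 := by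
  have h0 : (0 : Y) ∈ K := by
    obtain ⟨x, hx⟩ := hne
    have ht : Filter.Tendsto (fun n : ℕ => (1 / ((n : ℝ) + 1)) • x) Filter.atTop
        (nhds ((0 : ℝ) • x)) :=
      tendsto_one_div_add_atTop_nhds_zero_nat.smul_const x
    rw [zero_smul] at ht
    exact hc.mem_of_tendsto ht (Filter.Eventually.of_forall fun n => K.smul_mem (by positivity) hx)
  obtain ⟨f, u, hfb, hfK⟩ := geometric_hahn_banach_point_closed K.convex hc hb
  have hu : u < 0 := by simpa using hfK 0 h0
  have hpos : ∀ a ∈ K, 0 ≤ f a := by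
    intro a ha
    by_contra hneg
    push_neg at hneg
    have := hfK ((u / f a) • a) (K.smul_mem (div_pos_of_neg_of_neg hu hneg) ha)
    rw [map_smul, smul_eq_mul, div_mul_cancel₀ _ hneg.ne] at this
    exact lt_irrefl _ this
  refine ⟨(InnerProductSpace.toDual ℝ Y).symm f, fun x hx => ?_, ?_⟩
  · rw [real_inner_comm, InnerProductSpace.toDual_symm_apply]; exact hpos x hx
  · rw [InnerProductSpace.toDual_symm_apply]; linarith

lemma mem_of_dual {K : Set Y} (hcl : IsClosed K) (hconv : Convex ℝ K)
    (hcone : ∀ t : ℝ, 0 ≤ t → ∀ x ∈ K, t • x ∈ K) (hne : K.Nonempty)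
    {s : Y} (h : ∀ y ∈ dualConeSet K, 0 ≤ ⟪y, s⟫) : s ∈ K := by
  by_contra hs
  obtain ⟨y, hy1, hy2⟩ :=
    cone_sep (toCone K hconv hcone) hne hcl hs
  have hyd : y ∈ dualConeSet K := fun x hx => by
    rw [real_inner_comm]; exact hy1 x hx
  exact absurd (h y hyd) (not_le.mpr hy2)

lemma isFaceOf_trans {K F E : Set Y} (h1 : IsFaceOf K F) (h2 : IsFaceOf F E) : IsFaceOf K E :=
  ⟨h2.1.trans h1.1, h2.2.1, fun x₁ hx₁ x₂ hx₂ hm =>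
    h2.2.2 x₁ (h1.2.2 x₁ hx₁ x₂ hx₂ (h2.1 hm)).1 x₂ (h1.2.2 x₁ hx₁ x₂ hx₂ (h2.1 hm)).2 hm⟩

lemma isFaceOf_inter {K : Set Y} (hconv : Convex ℝ K) {z : Y} (hz : z ∈ dualConeSet K) :
    IsFaceOf K (K ∩ {y | ⟪z, y⟫ = 0}) := by
  refine ⟨Set.inter_subset_left, ?_, ?_⟩
  · intro p hp q hq a a' ha ha' haa
    refine ⟨hconv hp.1 hq.1 ha ha' haa, ?_⟩
    have hp2 : ⟪z, p⟫ = 0 := hp.2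
    have hq2 : ⟪z, q⟫ = 0 := hq.2
    show ⟪z, a • p + a' • q⟫ = 0
    rw [inner_add_right, real_inner_smul_right, real_inner_smul_right, hp2, hq2]; ring
  · intro x₁ hx₁ x₂ hx₂ hm
    have h1 : 0 ≤ ⟪z, x₁⟫ := hz x₁ hx₁
    have h2 : 0 ≤ ⟪z, x₂⟫ := hz x₂ hx₂
    have hm2 : ⟪z, (1/2 : ℝ) • (x₁ + x₂)⟫ = 0 := hm.2
    rw [real_inner_smul_right, inner_add_right] at hm2
    have e1 : ⟪z, x₁⟫ = 0 := by linarith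
    have e2 : ⟪z, x₂⟫ = 0 := by linarith
    exact ⟨⟨hx₁, e1⟩, ⟨hx₂, e2⟩⟩

lemma dual_face_eq {K : Set Y} (hcl : IsClosed K) (hconv : Convex ℝ K)
    (hcone : ∀ t : ℝ, 0 ≤ t → ∀ x ∈ K, t • x ∈ K) (hne : K.Nonempty)
    {z : Y} (hz : z ∈ dualConeSet K)
    (hsumcl : IsClosed (dualConeSet K + {y : Y | ∀ e ∈ K ∩ {y' : Y | ⟪z, y'⟫ = 0}, ⟪y, e⟫ = 0})) :
    dualConeSet (K ∩ {y' : Y | ⟪z, y'⟫ = 0})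
      = dualConeSet K + {y : Y | ∀ e ∈ K ∩ {y' : Y | ⟪z, y'⟫ = 0}, ⟪y, e⟫ = 0} := by
  apply Set.Subset.antisymm
  · intro p hp
    set Sset : Set Y := dualConeSet K + {w : Y | ∃ t : ℝ, w = t • z} with hSset
    have hmemS : ∀ y ∈ dualConeSet K, ∀ t : ℝ, y + t • z ∈ Sset := by
      intro y hy t
      exact Set.add_mem_add hy ⟨t, rfl⟩
    have hSadd : ∀ a ∈ Sset, ∀ a' ∈ Sset, a + a' ∈ Sset := by
      rintro a ⟨k, hk, w, ⟨t, rfl⟩, rfl⟩ a' ⟨k', hk', w', ⟨t', rfl⟩, rfl⟩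
      have : k + t • z + (k' + t' • z) = (k + k') + (t + t') • z := by
        rw [add_smul]; abel
      rw [this]
      exact hmemS _ (dcs_add hk hk') _
    have hSsmul : ∀ c0 : ℝ, 0 < c0 → ∀ a ∈ Sset, c0 • a ∈ Sset := by
      rintro c0 hc0 a ⟨k, hk, w, ⟨t, rfl⟩, rfl⟩
      have : c0 • (k + t • z) = c0 • k + (c0 * t) • z := by
        rw [smul_add, smul_smul]
      rw [this]
      exact hmemS _ (dcs_smul hc0.le hk) _
    set C : ConvexCone ℝ Y :=
      ConvexCone.closure ⟨Sset, fun c0 hc0 a ha => hSsmul c0 hc0 a ha,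
        fun a ha a' ha' => hSadd a ha a' ha'⟩ with hC
    have hzero : (0 : Y) ∈ Sset := by
      have h0 := hmemS 0 (dcs_zero K) 0
      simpa using h0
    have hsub : Sset ⊆ dualConeSet K + {y : Y | ∀ e ∈ K ∩ {y' : Y | ⟪z, y'⟫ = 0}, ⟪y, e⟫ = 0} := by
      rintro q ⟨k, hk, w, ⟨t, rfl⟩, rfl⟩
      refine Set.add_mem_add hk ?_
      intro e he
      rw [real_inner_smul_left, he.2, mul_zero]
    have hclsub : closure Sset ⊆
        dualConeSet K + {y : Y | ∀ e ∈ K ∩ {y' : Y | ⟪z, y'⟫ = 0}, ⟪y, e⟫ = 0} := by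
      rw [← hsumcl.closure_eq]
      exact closure_mono hsub
    apply hclsub
    by_contra hpc
    obtain ⟨s, hs1, hs2⟩ := cone_sep C
      ⟨0, subset_closure hzero⟩ isClosed_closure hpc
    have hsK : s ∈ K := by
      apply mem_of_dual hcl hconv hcone hne
      intro y hy
      exact hs1 y (subset_closure (by simpa using hmemS y hy 0))
    have hz1 : 0 ≤ ⟪z, s⟫ := hs1 z (subset_closure (by simpa using hmemS 0 (dcs_zero K) 1))
    have hz2 : 0 ≤ ⟪-z, s⟫ := by
      refine hs1 (-z) (subset_closure ?_)
      have := hmemS 0 (dcs_zero K) (-1)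
      simpa using this
    rw [inner_neg_left] at hz2
    have hzs : ⟪z, s⟫ = 0 := by linarith
    have h0 := hp s ⟨hsK, hzs⟩
    rw [real_inner_comm] at hs2
    linarith
  · rintro q ⟨k, hk, w, hw, rfl⟩
    intro x hx
    rw [inner_add_left, hw x hx, add_zero]
    exact hk x hx.1

lemma seq_dichotomy (A : X →ₗ[ℝ] Y) (b : Y) (K : Set Y) {c : X} {v : ℝ}
    (hcv : (c, v) ∈ closure {p : X × ℝ | ∃ y ∈ dualConeSet K,
        p = (LinearMap.adjoint A y, ⟪b, y⟫)}) :
    ((c, v) ∈ {p : X × ℝ | ∃ y ∈ dualConeSet K, p = (LinearMap.adjoint A y, ⟪b, y⟫)}) ∨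
      ∃ z : Y, z ∈ dualConeSet K ∧ LinearMap.adjoint A z = 0 ∧ ⟪b, z⟫ = 0 ∧
        ∃ k ∈ K, ⟪z, k⟫ ≠ 0 := by
  obtain ⟨u, hu, hulim⟩ := mem_closure_iff_seq_limit.mp hcv
  choose y hy hTy using hu
  set V : Submodule ℝ Y :=
    ((Submodule.span ℝ K)ᗮ ⊓ (Submodule.span ℝ {b})ᗮ) ⊓ LinearMap.ker (LinearMap.adjoint A)
    with hV
  set y' : ℕ → Y := fun n => y n - (Submodule.orthogonalProjectionOnto V (y n) : Y) with hy'def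
  have hpmem : ∀ n, ((Submodule.orthogonalProjectionOnto V (y n)) : Y) ∈ V := fun n => SetLike.coe_mem _
  have hpK : ∀ n, ∀ x ∈ K, ⟪(Submodule.orthogonalProjectionOnto V (y n) : Y), x⟫ = 0 := by
    intro n x hx
    have h1 : (Submodule.orthogonalProjectionOnto V (y n) : Y) ∈ (Submodule.span ℝ K)ᗮ := ((hpmem n).1).1
    rw [real_inner_comm]
    exact (Submodule.mem_orthogonal _ _).mp h1 x (Submodule.subset_span hx)
  have hy'K : ∀ n, y' n ∈ dualConeSet K := by
    intro n x hx
    have h0 := hy n x hx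
    show 0 ≤ ⟪y n - (Submodule.orthogonalProjectionOnto V (y n) : Y), x⟫
    rw [inner_sub_left, hpK n x hx, sub_zero]
    exact h0
  have hadj : ∀ n, LinearMap.adjoint A (y' n) = (u n).1 := by
    intro n
    have hker : LinearMap.adjoint A ((Submodule.orthogonalProjectionOnto V (y n) : Y)) = 0 :=
      LinearMap.mem_ker.mp ((hpmem n).2)
    show LinearMap.adjoint A (y n - (Submodule.orthogonalProjectionOnto V (y n) : Y)) = (u n).1
    rw [map_sub, hker, sub_zero, hTy n]
  have hbv : ∀ n, ⟪b, y' n⟫ = (u n).2 := by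
    intro n
    have hb0 : ⟪b, (Submodule.orthogonalProjectionOnto V (y n) : Y)⟫ = 0 := by
      have h1 : (Submodule.orthogonalProjectionOnto V (y n) : Y) ∈ (Submodule.span ℝ {b})ᗮ := ((hpmem n).1).2
      have := (Submodule.mem_orthogonal _ _).mp h1 b (Submodule.mem_span_singleton_self b)
      exact this
    show ⟪b, y n - (Submodule.orthogonalProjectionOnto V (y n) : Y)⟫ = (u n).2
    rw [inner_sub_right, hb0, sub_zero, hTy n]
  have hVorth : ∀ n, y' n ∈ Vᗮ := fun n =>
    Submodule.sub_starProjection_mem_orthogonal (K := V) (y n)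
  have h1 : Filter.Tendsto (fun n => (u n).1) Filter.atTop (nhds c) :=
    (continuous_fst.tendsto _).comp hulim
  have h2 : Filter.Tendsto (fun n => (u n).2) Filter.atTop (nhds v) :=
    (continuous_snd.tendsto _).comp hulim
  by_cases hbd : ∃ M : ℝ, ∃ᶠ n in Filter.atTop, ‖y' n‖ ≤ M
  · left
    obtain ⟨M, hM⟩ := hbd
    obtain ⟨φ, hφmono, hφ⟩ := Filter.extraction_of_frequently_atTop hM
    have hball : ∀ n, y' (φ n) ∈ Metric.closedBall (0 : Y) M := fun n => by
      simpa [Metric.mem_closedBall, dist_zero_right] using hφ n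
    obtain ⟨w, -, ψ, hψmono, hψlim⟩ := (isCompact_closedBall (0 : Y) M).tendsto_subseq hball
    refine ⟨w, ?_, ?_⟩
    · exact (dcs_isClosed K).mem_of_tendsto hψlim (Filter.Eventually.of_forall fun n => hy'K _)
    · have hcont : Continuous fun q : Y => ((LinearMap.adjoint A) q, (⟪b, q⟫ : ℝ)) :=
        ((LinearMap.adjoint A).continuous_of_finiteDimensional).prodMk
          (Continuous.inner continuous_const continuous_id)
      have hl1 : Filter.Tendsto
          (fun n => ((LinearMap.adjoint A) (y' (φ (ψ n))), (⟪b, y' (φ (ψ n))⟫ : ℝ)))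
          Filter.atTop (nhds ((LinearMap.adjoint A) w, (⟪b, w⟫ : ℝ))) :=
        (hcont.tendsto w).comp hψlim
      have heq : (fun n => ((LinearMap.adjoint A) (y' (φ (ψ n))), (⟪b, y' (φ (ψ n))⟫ : ℝ)))
          = fun n => u (φ (ψ n)) := by
        funext n; rw [hadj, hbv]
      have hl2 : Filter.Tendsto (fun n => u (φ (ψ n))) Filter.atTop (nhds (c, v)) :=
        hulim.comp ((hφmono.comp hψmono).tendsto_atTop)
      rw [heq] at hl1
      exact tendsto_nhds_unique hl2 hl1
  · right
    push_neg at hbd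
    have hev : ∀ M : ℝ, ∀ᶠ n in Filter.atTop, M < ‖y' n‖ := by
      intro M
      exact hbd M
    have hnorm : Filter.Tendsto (fun n => ‖y' n‖) Filter.atTop Filter.atTop :=
      Filter.tendsto_atTop.mpr fun M => (hev M).mono fun n h => h.le
    set w : ℕ → Y := fun n => ‖y' n‖⁻¹ • y' n with hwdef
    have hwval : ∀ n, w n = ‖y' n‖⁻¹ • y' n := fun n => rfl
    have hwball : ∀ n, w n ∈ Metric.closedBall (0 : Y) 1 := by
      intro n
      rcases eq_or_ne (y' n) 0 with h | h
      · simp [hwval, h]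
      · rw [Metric.mem_closedBall, dist_zero_right, hwval, norm_smul, norm_inv, norm_norm,
          inv_mul_cancel₀ (norm_ne_zero_iff.mpr h)]
    obtain ⟨z, -, φ, hφmono, hzlim⟩ := (isCompact_closedBall (0 : Y) 1).tendsto_subseq hwball
    have hwK : ∀ n, w n ∈ dualConeSet K := fun n =>
      dcs_smul (inv_nonneg.mpr (norm_nonneg _)) (hy'K n)
    have hzK : z ∈ dualConeSet K :=
      (dcs_isClosed K).mem_of_tendsto hzlim (Filter.Eventually.of_forall fun n => hwK _)
    have hinv : Filter.Tendsto (fun n => ‖y' (φ n)‖⁻¹) Filter.atTop (nhds 0) :=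
      tendsto_inv_atTop_zero.comp (hnorm.comp hφmono.tendsto_atTop)
    have hadjz : LinearMap.adjoint A z = 0 := by
      have e1 : Filter.Tendsto (fun n => LinearMap.adjoint A (w (φ n))) Filter.atTop
          (nhds (LinearMap.adjoint A z)) :=
        (((LinearMap.adjoint A).continuous_of_finiteDimensional).tendsto z).comp hzlim
      have e2 : (fun n => LinearMap.adjoint A (w (φ n)))
          = fun n => ‖y' (φ n)‖⁻¹ • (u (φ n)).1 := by
        funext n; rw [hwval, map_smul, hadj]
      have e3 : Filter.Tendsto (fun n => ‖y' (φ n)‖⁻¹ • (u (φ n)).1) Filter.atTop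
          (nhds ((0 : ℝ) • c)) := hinv.smul (h1.comp hφmono.tendsto_atTop)
      rw [zero_smul] at e3
      rw [e2] at e1
      exact tendsto_nhds_unique e1 e3
    have hbz : ⟪b, z⟫ = 0 := by
      have e1 : Filter.Tendsto (fun n => (⟪b, w (φ n)⟫ : ℝ)) Filter.atTop (nhds ⟪b, z⟫) :=
        ((Continuous.inner continuous_const continuous_id).tendsto z).comp hzlim
      have e2 : (fun n => (⟪b, w (φ n)⟫ : ℝ)) = fun n => ‖y' (φ n)‖⁻¹ * (u (φ n)).2 := by
        funext n; rw [hwval, real_inner_smul_right, hbv]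
      have e3 : Filter.Tendsto (fun n => ‖y' (φ n)‖⁻¹ * (u (φ n)).2) Filter.atTop
          (nhds (0 * v)) := hinv.mul (h2.comp hφmono.tendsto_atTop)
      rw [zero_mul] at e3
      rw [e2] at e1
      exact tendsto_nhds_unique e1 e3
    refine ⟨z, hzK, hadjz, hbz, ?_⟩
    by_contra hk
    push_neg at hk
    have hzV : z ∈ V := by
      refine Submodule.mem_inf.mpr ⟨Submodule.mem_inf.mpr ⟨?_, ?_⟩, ?_⟩
      · rw [Submodule.mem_orthogonal]
        intro t ht
        refine Submodule.span_induction (fun x hx => ?_) ?_ (fun a a' _ _ ha ha' => ?_)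
          (fun r a _ ha => ?_) ht
        · rw [real_inner_comm]; exact hk x hx
        · rw [inner_zero_left]
        · rw [inner_add_left, ha, ha', add_zero]
        · rw [real_inner_smul_left, ha, mul_zero]
      · rw [Submodule.mem_orthogonal]
        intro t ht
        obtain ⟨r, rfl⟩ := Submodule.mem_span_singleton.mp ht
        rw [real_inner_smul_left, hbz, mul_zero]
      · exact LinearMap.mem_ker.mpr hadjz
    have hzVbot : z ∈ Vᗮ := by
      have hmem : ∀ n, w (φ n) ∈ Vᗮ := fun n => Submodule.smul_mem _ _ (hVorth (φ n))
      exact (Submodule.closed_of_finiteDimensional Vᗮ).mem_of_tendsto hzlim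
        (Filter.Eventually.of_forall hmem)
    have hz0 : z = 0 := by
      have h3 := (Submodule.mem_orthogonal V z).mp hzVbot z hzV
      exact inner_self_eq_zero.mp h3
    have hnz : ‖z‖ = 1 := by
      have e1 : Filter.Tendsto (fun n => ‖w (φ n)‖) Filter.atTop (nhds ‖z‖) :=
        ((continuous_norm).tendsto z).comp hzlim
      have e2 : ∀ᶠ n in Filter.atTop, ‖w (φ n)‖ = 1 := by
        have h3 : ∀ᶠ n in Filter.atTop, (0:ℝ) < ‖y' (φ n)‖ :=
          (hnorm.comp hφmono.tendsto_atTop).eventually_gt_atTop 0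
        refine h3.mono fun n h => ?_
        rw [hwval, norm_smul, norm_inv, norm_norm, inv_mul_cancel₀ (ne_of_gt h)]
      have e3 : Filter.Tendsto (fun n => ‖w (φ n)‖) Filter.atTop (nhds 1) :=
        Filter.Tendsto.congr' (e2.mono fun n h => h.symm) tendsto_const_nhds
      exact tendsto_nhds_unique e1 e3
    rw [hz0, norm_zero] at hnz
    norm_num at hnz

lemma hard (A : X →ₗ[ℝ] Y) (b : Y) : ∀ (n : ℕ) (K : Set Y),
    IsClosed K → Convex ℝ K → (∀ t : ℝ, 0 ≤ t → ∀ x ∈ K, t • x ∈ K) →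
    (∃ x : X, b - A x ∈ K) →
    (∀ E : Set Y, IsFaceOf K E →
      IsClosed (dualConeSet K + {y : Y | ∀ e ∈ E, ⟪y, e⟫ = 0})) →
    WellBehavedSystem A b K →
    Module.finrank ℝ (Submodule.span ℝ K) ≤ n →
    IsClosed {p : X × ℝ | ∃ y ∈ dualConeSet K, p = (LinearMap.adjoint A y, ⟪b, y⟫)} := by
  intro n
  induction n using Nat.strong_induction_on with
  | _ n IH =>
  intro K hKclosed hKconv hKcone hP hnice hWB hrank
  apply isClosed_of_closure_subset
  rintro ⟨c, v⟩ hcv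
  rcases seq_dichotomy A b K hcv with hmem | ⟨z, hzK, hzadj, hzb, k₀, hk₀K, hk₀⟩
  · exact hmem
  · set F' : Set Y := K ∩ {y' : Y | ⟪z, y'⟫ = 0} with hF'
    obtain ⟨x₀, hx₀⟩ := hP
    have hKne : K.Nonempty := ⟨_, hx₀⟩
    have hslack : ∀ x : X, ⟪z, b - A x⟫ = 0 := by
      intro x
      have hzb' : ⟪z, b⟫ = 0 := by rw [real_inner_comm]; exact hzb
      rw [inner_sub_right, hzb',
        show ⟪z, A x⟫ = ⟪LinearMap.adjoint A z, x⟫ from (LinearMap.adjoint_inner_left A x z).symm,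
        hzadj]
      simp
    have hfeq : ∀ x : X, b - A x ∈ F' ↔ b - A x ∈ K :=
      fun x => ⟨fun h => h.1, fun h => ⟨h, hslack x⟩⟩
    have hF'sub : F' ⊆ K := Set.inter_subset_left
    have hface : IsFaceOf K F' := isFaceOf_inter hKconv hzK
    have hdualeq : dualConeSet F' = dualConeSet K + {y : Y | ∀ e ∈ F', ⟪y, e⟫ = 0} :=
      dual_face_eq hKclosed hKconv hKcone hKne hzK (hnice F' hface)
    have hF'closed : IsClosed F' :=
      hKclosed.inter (isClosed_eq (Continuous.inner continuous_const continuous_id)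
        continuous_const)
    have hF'conv : Convex ℝ F' := hface.2.1
    have hF'cone : ∀ t : ℝ, 0 ≤ t → ∀ x ∈ F', t • x ∈ F' := by
      intro t ht x hx
      refine ⟨hKcone t ht x hx.1, ?_⟩
      show ⟪z, t • x⟫ = 0
      rw [real_inner_smul_right, hx.2, mul_zero]
    have hF'P : ∃ x : X, b - A x ∈ F' := ⟨x₀, (hfeq x₀).mpr hx₀⟩
    have hF'nice : ∀ E : Set Y, IsFaceOf F' E →
        IsClosed (dualConeSet F' + {y : Y | ∀ e ∈ E, ⟪y, e⟫ = 0}) := by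
      intro E hE
      have hEK : IsFaceOf K E := isFaceOf_trans hface hE
      have hPE : dualConeSet F' + {y : Y | ∀ e ∈ E, ⟪y, e⟫ = 0}
          = dualConeSet K + {y : Y | ∀ e ∈ E, ⟪y, e⟫ = 0} := by
        rw [hdualeq, add_assoc]
        congr 1
        apply Set.Subset.antisymm
        · rintro q ⟨p1, hp1, p2, hp2, rfl⟩
          intro e he
          rw [inner_add_left, hp1 e (hE.1 he), hp2 e he, add_zero]
        · intro q hq
          exact ⟨0, fun e _ => inner_zero_left e, q, hq, zero_add q⟩
      rw [hPE]
      exact hnice E hEK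
    have hF'WB : WellBehavedSystem A b F' := by
      intro c' v' hlub
      have hsets : {r : ℝ | ∃ x : X, b - A x ∈ F' ∧ r = ⟪c', x⟫}
          = {r : ℝ | ∃ x : X, b - A x ∈ K ∧ r = ⟪c', x⟫} := by
        ext r
        constructor <;> rintro ⟨x, hx, rfl⟩
        · exact ⟨x, (hfeq x).mp hx, rfl⟩
        · exact ⟨x, (hfeq x).mpr hx, rfl⟩
      rw [hsets] at hlub
      obtain ⟨yw, hyw, hw1, hw2⟩ := hWB c' v' hlub
      exact ⟨yw, dcs_antitone hF'sub hyw, hw1, hw2⟩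
    have hrankF' : Module.finrank ℝ (Submodule.span ℝ F') < n := by
      have hle : Submodule.span ℝ F' ≤ Submodule.span ℝ K := Submodule.span_mono hF'sub
      have hk₀span : k₀ ∈ Submodule.span ℝ K := Submodule.subset_span hk₀K
      have hk₀not : k₀ ∉ Submodule.span ℝ F' := by
        intro hmem2
        have hsub2 : Submodule.span ℝ F' ≤ (Submodule.span ℝ {z})ᗮ := by
          rw [Submodule.span_le]
          intro e he
          rw [SetLike.mem_coe, Submodule.mem_orthogonal]
          intro t ht
          obtain ⟨r, rfl⟩ := Submodule.mem_span_singleton.mp ht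
          rw [real_inner_smul_left, he.2, mul_zero]
        have h3 := (Submodule.mem_orthogonal _ _).mp (hsub2 hmem2) z
          (Submodule.mem_span_singleton_self z)
        exact hk₀ h3
      have hlt : Submodule.span ℝ F' < Submodule.span ℝ K :=
        SetLike.lt_iff_le_and_exists.mpr ⟨hle, k₀, hk₀span, hk₀not⟩
      exact lt_of_lt_of_le (Submodule.finrank_lt_finrank_of_lt hlt) hrank
    have hSF' := IH _ hrankF' F' hF'closed hF'conv hF'cone hF'P hF'nice hF'WB le_rfl
    have hsubS : {p : X × ℝ | ∃ yq ∈ dualConeSet K, p = (LinearMap.adjoint A yq, ⟪b, yq⟫)}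
        ⊆ {p : X × ℝ | ∃ yq ∈ dualConeSet F', p = (LinearMap.adjoint A yq, ⟪b, yq⟫)} := by
      rintro p ⟨yq, hyq, rfl⟩
      exact ⟨yq, dcs_antitone hF'sub hyq, rfl⟩
    have hcvF' : (c, v) ∈ {p : X × ℝ | ∃ yq ∈ dualConeSet F',
        p = (LinearMap.adjoint A yq, ⟪b, yq⟫)} := by
      have h4 := closure_mono hsubS hcv
      rwa [hSF'.closure_eq] at h4
    obtain ⟨yy, hyyF, hyyp⟩ := hcvF'
    rw [hdualeq] at hyyF
    obtain ⟨y₁, hy₁, w, hw, hsum⟩ := hyyF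
    have hwslack : ∀ x : X, b - A x ∈ K → ⟪w, b - A x⟫ = 0 := fun x hx => hw _ ⟨hx, hslack x⟩
    have hkey : ∀ x : X, b - A x ∈ K → ⟪LinearMap.adjoint A w, x⟫ = ⟪b, w⟫ := by
      intro x hx
      have e1 : ⟪LinearMap.adjoint A w, x⟫ = ⟪w, A x⟫ := LinearMap.adjoint_inner_left A x w
      have e2 : ⟪w, A x⟫ = ⟪w, b⟫ - ⟪w, b - A x⟫ := by
        rw [inner_sub_right]; ring
      rw [e1, e2, hwslack x hx, sub_zero, real_inner_comm]
    have hRset : {r : ℝ | ∃ x : X, b - A x ∈ K ∧ r = ⟪LinearMap.adjoint A w, x⟫}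
        = {⟪b, w⟫} := by
      ext r
      constructor
      · rintro ⟨x, hx, rfl⟩
        exact hkey x hx
      · intro hr
        rw [Set.mem_singleton_iff] at hr
        exact ⟨x₀, hx₀, by rw [hr, hkey x₀ hx₀]⟩
    have hlubw : IsLUB {r : ℝ | ∃ x : X, b - A x ∈ K ∧ r = ⟪LinearMap.adjoint A w, x⟫}
        ⟪b, w⟫ := by
      rw [hRset]; exact isLUB_singleton
    obtain ⟨ρ, hρK, hρadj, hρb⟩ := hWB (LinearMap.adjoint A w) ⟪b, w⟫ hlubw
    refine ⟨y₁ + ρ, dcs_add hy₁ hρK, ?_⟩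
    have e1 : LinearMap.adjoint A (y₁ + ρ) = LinearMap.adjoint A yy := by
      rw [map_add, hρadj, ← hsum, map_add]
    have e2 : ⟪b, y₁ + ρ⟫ = ⟪b, yy⟫ := by
      rw [inner_add_right, hρb, ← hsum, inner_add_right]
    rw [hyyp, e1, e2]

set_option maxHeartbeats 2000000 in
lemma easy (A : X →ₗ[ℝ] Y) (b : Y) (K : Set Y)
    (hKclosed : IsClosed K) (hKconv : Convex ℝ K)
    (hKcone : ∀ t : ℝ, 0 ≤ t → ∀ x ∈ K, t • x ∈ K)
    (hP : ∃ x : X, b - A x ∈ K)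
    (hS : IsClosed {p : X × ℝ | ∃ y ∈ dualConeSet K, p = (LinearMap.adjoint A y, ⟪b, y⟫)}) :
    WellBehavedSystem A b K := by
  intro c v hlub
  set S := {p : X × ℝ | ∃ y ∈ dualConeSet K, p = (LinearMap.adjoint A y, ⟪b, y⟫)} with hSdef
  obtain ⟨x₀, hx₀⟩ := hP
  have hx₀v : ⟪c, x₀⟫ ≤ v := hlub.1 ⟨x₀, hx₀, rfl⟩
  have hKne : K.Nonempty := ⟨_, hx₀⟩
  suffices hmem : (c, v) ∈ S by
    obtain ⟨y, hy, heq⟩ := hmem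
    exact ⟨y, hy, (congrArg Prod.fst heq).symm, (congrArg Prod.snd heq).symm⟩
  by_contra hcv
  have hSconv : Convex ℝ S := by
    rintro p ⟨y, hy, rfl⟩ q ⟨y', hy', rfl⟩ a a' ha ha' haa
    refine ⟨a • y + a' • y', dcs_add (dcs_smul ha hy) (dcs_smul ha' hy'), ?_⟩
    rw [Prod.ext_iff]
    constructor
    · show a • LinearMap.adjoint A y + a' • LinearMap.adjoint A y'
        = LinearMap.adjoint A (a • y + a' • y')
      rw [map_add, map_smul, map_smul]
    · show a • (⟪b, y⟫ : ℝ) + a' • (⟪b, y'⟫ : ℝ) = ⟪b, a • y + a' • y'⟫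
      rw [inner_add_right, real_inner_smul_right, real_inner_smul_right, smul_eq_mul,
        smul_eq_mul]
  have hSmem0 : (0 : X × ℝ) ∈ S := ⟨0, dcs_zero K, by
    rw [Prod.ext_iff]
    constructor
    · show (0 : X) = LinearMap.adjoint A 0
      rw [map_zero]
    · show (0 : ℝ) = ⟪b, (0 : Y)⟫
      rw [inner_zero_right]⟩
  obtain ⟨f, t, hft, hfS⟩ := geometric_hahn_banach_point_closed hSconv hS hcv
  have ht0 : t < 0 := by
    have h0 := hfS 0 hSmem0
    rwa [map_zero] at h0
  have hfpos : ∀ p ∈ S, 0 ≤ f p := by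
    intro p hp
    by_contra hneg
    push_neg at hneg
    obtain ⟨y, hy, rfl⟩ := hp
    set s0 : ℝ := (t - 1) / f (LinearMap.adjoint A y, ⟪b, y⟫) with hs0
    have hs0pos : 0 < s0 := div_pos_of_neg_of_neg (by linarith) hneg
    have hmem : s0 • ((LinearMap.adjoint A y : X), (⟪b, y⟫ : ℝ)) ∈ S := by
      refine ⟨s0 • y, dcs_smul hs0pos.le hy, ?_⟩
      rw [Prod.ext_iff]
      constructor
      · show s0 • LinearMap.adjoint A y = LinearMap.adjoint A (s0 • y)
        rw [map_smul]
      · show s0 • (⟪b, y⟫ : ℝ) = ⟪b, s0 • y⟫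
        rw [real_inner_smul_right, smul_eq_mul]
    have h5 := hfS _ hmem
    rw [map_smul, smul_eq_mul, hs0, div_mul_cancel₀ _ (ne_of_lt hneg)] at h5
    linarith
  set g : X →L[ℝ] ℝ := f.comp (ContinuousLinearMap.inl ℝ X ℝ) with hg
  set xs : X := (InnerProductSpace.toDual ℝ X).symm g with hxs
  have hxs_apply : ∀ q : X, ⟪xs, q⟫ = f (q, 0) := fun q => by
    rw [hxs, InnerProductSpace.toDual_symm_apply]
    rfl
  set β : ℝ := f (0, 1) with hβdef
  have hsplit : ∀ (q : X) (s : ℝ), f (q, s) = ⟪xs, q⟫ + s * β := by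
    intro q s
    have hdecomp : (q, s) = (q, (0:ℝ)) + s • ((0:X), (1:ℝ)) := by
      rw [Prod.ext_iff]
      constructor
      · show q = q + s • 0
        rw [smul_zero, add_zero]
      · show s = 0 + s • 1
        rw [smul_eq_mul, mul_one, zero_add]
    rw [hdecomp, map_add, map_smul, smul_eq_mul, hxs_apply]
  have hfK : A xs + β • b ∈ K := by
    apply mem_of_dual hKclosed hKconv hKcone hKne
    intro y hy
    have h0 : 0 ≤ f (LinearMap.adjoint A y, ⟪b, y⟫) := hfpos _ ⟨y, hy, rfl⟩
    rw [hsplit] at h0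
    calc (0:ℝ) ≤ ⟪xs, LinearMap.adjoint A y⟫ + ⟪b, y⟫ * β := h0
    _ = ⟪y, A xs + β • b⟫ := by
        rw [inner_add_right, real_inner_smul_right]
        have e1 : ⟪xs, LinearMap.adjoint A y⟫ = ⟪y, A xs⟫ := by
          rw [← LinearMap.adjoint_inner_left A xs y]
          exact real_inner_comm _ _
        have e2 : (⟪b, y⟫ : ℝ) = ⟪y, b⟫ := real_inner_comm _ _
        rw [e1, e2]
        ring
  have hneg : ⟪xs, c⟫ + v * β < 0 := by
    have h6 : f (c, v) < 0 := hft.trans ht0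
    rwa [hsplit] at h6
  rcases lt_trichotomy β 0 with hβ | hβ | hβ
  · -- β < 0
    have hβpos : 0 < -β := neg_pos.mpr hβ
    set uu : X := (-β)⁻¹ • xs with huu
    have hAu : A uu - b ∈ K := by
      have h1 : (-β)⁻¹ • (A xs + β • b) ∈ K :=
        hKcone _ (inv_nonneg.mpr hβpos.le) _ hfK
      have h2 : (-β)⁻¹ • (A xs + β • b) = A uu - b := by
        rw [huu, map_smul, smul_add, smul_smul,
          show (-β)⁻¹ * β = -1 by rw [inv_neg, neg_mul, inv_mul_cancel₀ (ne_of_lt hβ)], neg_one_smul, sub_eq_add_neg]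
      rwa [h2] at h1
    have hxc : ⟪xs, c⟫ = (-β) * ⟪c, uu⟫ := by
      rw [huu, real_inner_smul_right, real_inner_comm, ← mul_assoc,
        mul_inv_cancel₀ (ne_of_gt hβpos), one_mul]
    have hcu : ⟪c, uu⟫ < v := by
      rw [hxc] at hneg
      have h4 : (-β) * ⟪c, uu⟫ < (-β) * v := by nlinarith
      exact (mul_lt_mul_iff_right₀ hβpos).mp h4
    have hex : ∃ x', (b - A x' ∈ K) ∧ ⟪c, uu⟫ < ⟪c, x'⟫ := by
      by_contra hno
      push_neg at hno
      have hub : ⟪c, uu⟫ ∈ upperBounds {r : ℝ | ∃ x : X, b - A x ∈ K ∧ r = ⟪c, x⟫} := by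
        rintro r ⟨x, hx, rfl⟩
        exact hno x hx
      exact absurd (hlub.2 hub) (not_le.mpr hcu)
    obtain ⟨x', hx', hcx'⟩ := hex
    have hx'le : ⟪c, x'⟫ ≤ v := hlub.1 ⟨x', hx', rfl⟩
    have hden : 0 < ⟪c, x'⟫ - ⟪c, uu⟫ := sub_pos.mpr hcx'
    set s1 : ℝ := (v - ⟪c, x'⟫ + 1) / (⟪c, x'⟫ - ⟪c, uu⟫) with hs1
    have hs1pos : 0 ≤ s1 := div_nonneg (by linarith) hden.le
    have hfeas : b - A (x' + s1 • (x' - uu)) ∈ K := by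
      have hrw : b - A (x' + s1 • (x' - uu))
          = (b - A x') + s1 • ((A uu - b) + (b - A x')) := by
        rw [map_add, map_smul, map_sub]
        module
      rw [hrw]
      exact add_mem_of_convex hKconv hKcone _ hx' _
        (hKcone _ hs1pos _ (add_mem_of_convex hKconv hKcone _ hAu _ hx'))
    have hval : ⟪c, x' + s1 • (x' - uu)⟫ ≤ v := hlub.1 ⟨_, hfeas, rfl⟩
    rw [inner_add_right, real_inner_smul_right, inner_sub_right, hs1,
      div_mul_cancel₀ _ (ne_of_gt hden)] at hval
    linarith
  · -- β = 0
    rw [hβ, zero_smul, add_zero] at hfK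
    rw [hβ, mul_zero, add_zero] at hneg
    have hden : 0 < -⟪xs, c⟫ := neg_pos.mpr hneg
    set s1 : ℝ := (v - ⟪c, x₀⟫ + 1) / (-⟪xs, c⟫) with hs1
    have hs1pos : 0 ≤ s1 := div_nonneg (by linarith) hden.le
    have hfeas : b - A (x₀ - s1 • xs) ∈ K := by
      have hrw : b - A (x₀ - s1 • xs) = (b - A x₀) + s1 • (A xs) := by
        rw [map_sub, map_smul]
        abel
      rw [hrw]
      exact add_mem_of_convex hKconv hKcone _ hx₀ _ (hKcone _ hs1pos _ hfK)
    have hval : ⟪c, x₀ - s1 • xs⟫ ≤ v := hlub.1 ⟨_, hfeas, rfl⟩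
    rw [inner_sub_right, real_inner_smul_right, real_inner_comm xs c] at hval
    have hmul : s1 * ⟪xs, c⟫ = -(v - ⟪c, x₀⟫ + 1) := by
      rw [hs1, div_mul_eq_mul_div, div_neg, mul_div_assoc, div_self (ne_of_lt hneg)]
      ring
    rw [hmul] at hval
    linarith
  · -- β > 0
    have hfeas : b - A ((-β⁻¹) • xs) ∈ K := by
      have h1 : β⁻¹ • (A xs + β • b) ∈ K := hKcone _ (inv_nonneg.mpr hβ.le) _ hfK
      have h2 : β⁻¹ • (A xs + β • b) = b - A ((-β⁻¹) • xs) := by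
        rw [map_smul, neg_smul, smul_add, smul_smul, inv_mul_cancel₀ (ne_of_gt hβ), one_smul,
          sub_neg_eq_add]
        exact add_comm _ _
      rwa [h2] at h1
    have hle : ⟪c, (-β⁻¹) • xs⟫ ≤ v := hlub.1 ⟨_, hfeas, rfl⟩
    rw [real_inner_smul_right, real_inner_comm xs c] at hle
    have h4 := mul_le_mul_of_nonneg_left hle hβ.le
    rw [← mul_assoc, mul_neg, mul_inv_cancel₀ (ne_of_gt hβ)] at h4
    nlinarith

end WBAux

theorem wellBehaved_iff_closed_of_nice
    {X Y : Type*}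
    [NormedAddCommGroup X] [InnerProductSpace ℝ X] [FiniteDimensional ℝ X]
    [NormedAddCommGroup Y] [InnerProductSpace ℝ Y] [FiniteDimensional ℝ Y]
    (A : X →ₗ[ℝ] Y) (b : Y) (K : Set Y)
    (hKclosed : IsClosed K) (hKconv : Convex ℝ K)
    (hKcone : ∀ (t : ℝ), 0 ≤ t → ∀ x ∈ K, t • x ∈ K)
    (hP : ∃ x : X, b - A x ∈ K)
    (hnice : ∀ E : Set Y, IsFaceOf K E →
      IsClosed (dualConeSet K + {y : Y | ∀ e ∈ E, ⟪y, e⟫ = 0})) :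
    WellBehavedSystem A b K ↔
      IsClosed {p : X × ℝ | ∃ y ∈ dualConeSet K,
        p = (LinearMap.adjoint A y, ⟪b, y⟫)} := by
  constructor
  · intro hWB
    exact WBAux.hard A b (Module.finrank ℝ (Submodule.span ℝ K)) K hKclosed hKconv hKcone hP
      hnice hWB le_rfl
  · intro hS
    exact WBAux.easy A b K hKclosed hKconv hKcone hP hS
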